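/- arXiv:1512.06697 — 2 statements merged into one kernel-verified Lean document; each statement's English description precedes it below -/
import Mathlib

section
/- For 1 < j, each coordinate of the j-th block x_j (in the decreasing-magnitude block decomposition into blocks of size s) is at most ||x_{j-1}||_1 / s in absolute value; consequently ||x_j||_2 ≤ ||x_{j-1}||_1 / √s. -/
/-- The restriction of `x` to its `j`-th block of `s` coordinates, where the
coordinates are ordered by decreasing magnitude via the sorting permutation `σ`,
extended by zero. -/
noncomputable def blockPiece (n s : ℕ) (x : EuclideanSpace ℝ (Fin (n + 1)))
    (σ : Equiv.Perm (Fin (n + 1))) (j : ℕ) : EuclideanSpace ℝ (Fin (n + 1)) :=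
  WithLp.toLp 2 (fun i => if ((σ.symm i : ℕ) / s = j) then x i else 0)

/-- For `j ≥ 1`, each coordinate of the `j`-th block `x_j` is at most
`‖x_{j-1}‖₁ / s` in absolute value; consequently `‖x_j‖₂ ≤ ‖x_{j-1}‖₁ / √s`. -/
theorem block_coord_and_norm_bound (n s : ℕ) (hs : 0 < s)
    (x : EuclideanSpace ℝ (Fin (n + 1))) (σ : Equiv.Perm (Fin (n + 1)))
    (hσ : ∀ a b : Fin (n + 1), a ≤ b → |x (σ b)| ≤ |x (σ a)|)
    (j : ℕ) (hj : 1 ≤ j) :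
    (∀ i, |blockPiece n s x σ j i| ≤ (∑ i, |blockPiece n s x σ (j - 1) i|) / s) ∧
      ‖blockPiece n s x σ j‖ ≤ (∑ i, |blockPiece n s x σ (j - 1) i|) / Real.sqrt s := by
  set S := ∑ i, |blockPiece n s x σ (j - 1) i| with hSdef
  have hS0 : 0 ≤ S := Finset.sum_nonneg fun i _ => abs_nonneg _
  have hsR : (0:ℝ) < (s:ℝ) := by exact_mod_cast hs
  -- rewrite S as a sum over positions
  have hSperm : S = ∑ q : Fin (n+1), if ((q:ℕ)/s = j-1) then |x (σ q)| else 0 := by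
    rw [hSdef, ← Equiv.sum_comp σ (fun i => |blockPiece n s x σ (j-1) i|)]
    refine Finset.sum_congr rfl fun q _ => ?_
    simp only [blockPiece, WithLp.ofLp_toLp, Equiv.symm_apply_apply, apply_ite abs, abs_zero]
  have key : ∀ i, |blockPiece n s x σ j i| ≤ S / s := by
    intro i
    by_cases h : ((σ.symm i : ℕ) / s = j)
    · have hval : |blockPiece n s x σ j i| = |x i| := by simp [blockPiece, h]
      rw [hval]
      set p : Fin (n+1) := σ.symm i with hp
      have hxp : x i = x (σ p) := by rw [hp, Equiv.apply_symm_apply]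
      have hps : j * s ≤ (p : ℕ) := (Nat.le_div_iff_mul_le hs).mp h.ge
      -- injection of Fin s into the (j-1)-th block of positions
      have hfk : ∀ k : Fin s, (j-1)*s + (k:ℕ) < n + 1 := by
        intro k
        have hlt : (j-1)*s + (k:ℕ) < j*s := by
          have heq : (j-1)*s + s = j*s := by
            have h1 : j - 1 + 1 = j := by omega
            calc (j-1)*s + s = (j-1+1)*s := by ring
              _ = j*s := by rw [h1]
          omega
        exact lt_of_lt_of_le hlt (le_trans hps p.isLt.le)
      set f : Fin s → Fin (n+1) := fun k => ⟨(j-1)*s + (k:ℕ), hfk k⟩ with hf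
      have hfdiv : ∀ k : Fin s, ((f k : ℕ))/s = j - 1 := by
        intro k
        simp only [hf]
        rw [mul_comm, Nat.mul_add_div hs, Nat.div_eq_of_lt k.isLt]
        omega
      have hfle : ∀ k : Fin s, |x (σ p)| ≤ |x (σ (f k))| := by
        intro k
        refine hσ (f k) p ?_
        have hlt : (j-1)*s + (k:ℕ) < j*s := by
          have h1 : j - 1 + 1 = j := by omega
          have : (j-1)*s + s = j*s := by
            calc (j-1)*s + s = (j-1+1)*s := by ring
              _ = j*s := by rw [h1]
          omega
        exact le_of_lt (show f k < p from Fin.lt_def.mpr (lt_of_lt_of_le hlt hps))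
      have hfinj : Function.Injective f := by
        intro a b hab
        simp only [hf, Fin.mk.injEq] at hab
        exact Fin.ext (by omega)
      have hmul : (s:ℝ) * |x i| ≤ S := by
        rw [hSperm, hxp]
        calc (s:ℝ) * |x (σ p)| = ∑ _k : Fin s, |x (σ p)| := by
              simp [Finset.sum_const, nsmul_eq_mul]
          _ ≤ ∑ k : Fin s, |x (σ (f k))| := Finset.sum_le_sum fun k _ => hfle k
          _ = ∑ k : Fin s, (if ((f k : ℕ))/s = j-1 then |x (σ (f k))| else 0) :=
              Finset.sum_congr rfl fun k _ => (if_pos (hfdiv k)).symm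
          _ = ∑ q ∈ Finset.univ.image f, (if (q:ℕ)/s = j-1 then |x (σ q)| else 0) :=
              (Finset.sum_image (f := fun q : Fin (n+1) =>
                if (q:ℕ)/s = j-1 then |x (σ q)| else 0)
                (fun a _ b _ hab => hfinj hab)).symm
          _ ≤ ∑ q : Fin (n+1), (if (q:ℕ)/s = j-1 then |x (σ q)| else 0) := by
              refine Finset.sum_le_sum_of_subset_of_nonneg (Finset.subset_univ _) ?_
              intro q _ _
              split <;> simp [abs_nonneg]
      rw [le_div_iff₀ hsR]
      linarith [hmul]
    · have hz : |blockPiece n s x σ j i| = 0 := by simp [blockPiece, h]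
      rw [hz]
      positivity
  refine ⟨key, ?_⟩
  rw [EuclideanSpace.norm_eq]
  set B := Finset.univ.filter (fun i : Fin (n+1) => ((σ.symm i : ℕ)/s = j)) with hB
  have hcard : B.card ≤ s := by
    have hmaps : ∀ i ∈ B, ((σ.symm i : ℕ) - j*s) ∈ Finset.range s := by
      intro i hi
      rw [hB, Finset.mem_filter] at hi
      have h1 : j*s ≤ ((σ.symm i : ℕ)) := (Nat.le_div_iff_mul_le hs).mp hi.2.ge
      have h2 : ((σ.symm i : ℕ)) < (j+1)*s := (Nat.div_lt_iff_lt_mul hs).mp (by omega)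
      have h3 : (j+1)*s = j*s + s := by ring
      rw [Finset.mem_range]; omega
    refine le_trans (Finset.card_le_card_of_injOn _ hmaps ?_) (by simp)
    intro a ha b hb hab
    simp only [hB, Finset.coe_filter, Set.mem_setOf_eq] at ha hb
    have hab' : ((σ.symm a : ℕ)) - j*s = ((σ.symm b : ℕ)) - j*s := hab
    have h1 : j*s ≤ ((σ.symm a : ℕ)) := (Nat.le_div_iff_mul_le hs).mp ha.2.ge
    have h2 : j*s ≤ ((σ.symm b : ℕ)) := (Nat.le_div_iff_mul_le hs).mp hb.2.ge
    have : σ.symm a = σ.symm b := Fin.ext (by omega)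
    exact σ.symm.injective this
  have hsum : ∑ i, ‖blockPiece n s x σ j i‖^2 ≤ S^2 / s := by
    calc ∑ i, ‖blockPiece n s x σ j i‖^2
        = ∑ i ∈ B, ‖blockPiece n s x σ j i‖^2 := by
          refine (Finset.sum_subset (Finset.subset_univ B) ?_).symm
          intro i _ hi
          rw [hB, Finset.mem_filter] at hi
          have : blockPiece n s x σ j i = 0 := by
            simp only [blockPiece, WithLp.ofLp_toLp]
            rw [if_neg (fun hc => hi ⟨Finset.mem_univ i, hc⟩)]
          rw [this]; simp
      _ ≤ ∑ _i ∈ B, (S/s)^2 := by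
          refine Finset.sum_le_sum fun i _ => ?_
          refine pow_le_pow_left₀ (norm_nonneg _) ?_ 2
          rw [Real.norm_eq_abs]; exact key i
      _ = (B.card : ℝ) * (S/s)^2 := by simp [Finset.sum_const, nsmul_eq_mul]
      _ ≤ (s:ℝ) * (S/s)^2 := by
          refine mul_le_mul_of_nonneg_right ?_ (sq_nonneg _)
          exact_mod_cast hcard
      _ = S^2/s := by field_simp
  calc Real.sqrt (∑ i, ‖blockPiece n s x σ j i‖^2) ≤ Real.sqrt (S^2/s) :=
        Real.sqrt_le_sqrt hsum
    _ = S / Real.sqrt s := by rw [Real.sqrt_div (sq_nonneg S), Real.sqrt_sq hS0]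
end

section
/- The set A = {e_1, ..., e_n, (1,...,1)/√n} of n+1 points on the unit sphere S^{n-1} ⊂ R^n is shattered by spherical caps: for every subset A'' ⊆ A there exists a half-space whose intersection with A equals A''. -/
/-- The set `A = {e_1, …, e_n, (1,…,1)/√n}` of `n+1` points on the unit sphere
`S^{n-1} ⊆ ℝⁿ` is shattered by half-spaces (hence by spherical caps): for every
subset `B ⊆ A` there is a half-space `{x : t ≤ ⟪x,θ⟫}` with `A ∩ {x : t ≤ ⟪x,θ⟫} = B`. -/
theorem basis_and_ones_shattered (n : ℕ) (hn : 0 < n) :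
    ∀ B ⊆ (Set.range fun i : Fin n => EuclideanSpace.single i (1 : ℝ)) ∪
        {(WithLp.toLp 2 (fun _ => (Real.sqrt n)⁻¹) : EuclideanSpace ℝ (Fin n))},
      ∃ θ : EuclideanSpace ℝ (Fin n), ∃ t : ℝ,
        ((Set.range fun i : Fin n => EuclideanSpace.single i (1 : ℝ)) ∪
            {(WithLp.toLp 2 (fun _ => (Real.sqrt n)⁻¹) : EuclideanSpace ℝ (Fin n))}) ∩
          {x : EuclideanSpace ℝ (Fin n) | t ≤ (inner ℝ x θ : ℝ)} = B := by
  classical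
  intro B hB
  set e : Fin n → EuclideanSpace ℝ (Fin n) := fun i => EuclideanSpace.single i 1 with he
  set u : EuclideanSpace ℝ (Fin n) := WithLp.toLp 2 (fun _ => (Real.sqrt n)⁻¹) with hu
  rcases eq_or_lt_of_le (Nat.succ_le_of_lt hn) with h1 | h2
  · -- n = 1
    subst h1
    have hu1 : u = e ⟨0, hn⟩ := by
      ext j
      have hj : j = ⟨0, hn⟩ := Subsingleton.elim _ _
      subst hj
      simp [hu, he]
    have hA : (Set.range e ∪ {u}) = {u} := by
      apply Set.Subset.antisymm
      · rintro x (⟨j, rfl⟩ | rfl)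
        · have hj : j = ⟨0, hn⟩ := Subsingleton.elim _ _
          simp [hu1, hj]
        · rfl
      · intro x hx; exact Or.inr hx
    rw [hA] at hB ⊢
    rcases Set.subset_singleton_iff_eq.mp hB with rfl | rfl
    · exact ⟨0, 1, by ext x; simp⟩
    · exact ⟨0, 0, by ext x; simp⟩
  · -- n ≥ 2
    have hr : (1 : ℝ) < Real.sqrt n := by
      rw [show (1:ℝ) = Real.sqrt 1 by simp]
      exact Real.sqrt_lt_sqrt (by norm_num) (by exact_mod_cast h2)
    set r : ℝ := Real.sqrt n with hrdef
    have hr0 : (0:ℝ) < r := by linarith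
    have hrn : r * r = n := Real.mul_self_sqrt (by positivity)
    set s : ℝ := ((Finset.univ.filter (fun j => e j ∈ B)).card : ℝ) with hs
    set c : ℝ := if u ∈ B then 1 else -1 with hc
    set l : ℝ := (1/2 - s/r + c)/(r-1) with hl
    have hlr : l * (r - 1) = 1/2 - s/r + c := by
      rw [hl]
      exact div_mul_cancel₀ _ (by linarith : r - 1 ≠ 0)
    refine ⟨WithLp.toLp 2 (fun j => (if e j ∈ B then (1:ℝ) else 0) + l), 1/2 + l, ?_⟩
    have hinner_e : ∀ j : Fin n, (inner ℝ (e j) (WithLp.toLp 2 (fun j => (if e j ∈ B then (1:ℝ) else 0) + l)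
        : EuclideanSpace ℝ (Fin n)) : ℝ) = (if e j ∈ B then (1:ℝ) else 0) + l := by
      intro j
      rw [he]
      rw [EuclideanSpace.inner_single_left]
      simp [he]
    have hinner_u : (inner ℝ u (WithLp.toLp 2 (fun j => (if e j ∈ B then (1:ℝ) else 0) + l)
        : EuclideanSpace ℝ (Fin n)) : ℝ) = (s + n * l) / r := by
      rw [PiLp.inner_apply]
      simp only [RCLike.inner_apply, conj_trivial, hu]
      rw [← Finset.sum_mul, Finset.sum_add_distrib, Finset.sum_boole, Finset.sum_const,
        Finset.card_univ, Fintype.card_fin, nsmul_eq_mul]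
      rw [hs, div_eq_mul_inv]
    have hu_iff : (1/2 + l ≤ (s + n * l) / r) ↔ u ∈ B := by
      have key : (s + n * l) / r - (1/2 + l) = c := by
        have : (s + n * l) / r = s / r + l * r := by
          rw [← hrn]; field_simp
        rw [this]
        have : l * r = l * (r - 1) + l := by ring
        rw [this, hlr]; ring
      constructor
      · intro h
        by_contra hcB
        have : c = -1 := by simp [hc, hcB]
        rw [this] at key; linarith
      · intro h
        have : c = 1 := by simp [hc, h]
        rw [this] at key; linarith
    ext x
    simp only [Set.mem_inter_iff, Set.mem_setOf_eq]
    constructor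
    · rintro ⟨hA, hx⟩
      rcases hA with ⟨j, rfl⟩ | rfl
      · rw [hinner_e] at hx
        by_contra hj
        rw [if_neg hj] at hx
        linarith
      · rw [hinner_u] at hx
        exact hu_iff.mp hx
    · intro hxB
      refine ⟨hB hxB, ?_⟩
      rcases hB hxB with ⟨j, rfl⟩ | rfl
      · rw [hinner_e, if_pos hxB]
        linarith
      · rw [hinner_u]
        exact hu_iff.mpr hxB
end
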